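/- For fixed N > 0 and R ≥ 0, the function f(γ) = ln 2 · √(N/(1 − (1+γ)⁻²)) · (log₂(1+γ) − R) is strictly increasing in γ on (0, ∞). -/

import Mathlib

lemma aux_mono (N c : ℝ) (hN : 0 < N) (hc : 0 ≤ c) :
    StrictMonoOn (fun x : ℝ => Real.sqrt N * (x / Real.sqrt (x ^ 2 - 1)) * (Real.log x - c))
      (Set.Ioi 1) := by
  have key : ∀ x ∈ Set.Ioi (1:ℝ), HasDerivAt
      (fun x : ℝ => Real.sqrt N * (x / Real.sqrt (x ^ 2 - 1)) * (Real.log x - c))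
      (Real.sqrt N * ((x ^ 2 - 1 - Real.log x + c) / Real.sqrt (x ^ 2 - 1) ^ 3)) x := by
    intro x hx
    have hx1 : (1:ℝ) < x := hx
    have hx0 : (0:ℝ) < x := lt_trans one_pos hx1
    have hpos : 0 < x ^ 2 - 1 := by nlinarith
    have hsq : HasDerivAt (fun x : ℝ => Real.sqrt (x ^ 2 - 1))
        (1 / (2 * Real.sqrt (x ^ 2 - 1)) * (2 * x)) x := by
      have h1 : HasDerivAt (fun x : ℝ => x ^ 2 - 1) (2 * x) x := by
        simpa using ((hasDerivAt_pow 2 x).sub_const 1)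
      exact (Real.hasDerivAt_sqrt hpos.ne').comp x h1
    set s := Real.sqrt (x ^ 2 - 1) with hsdef
    have hs : 0 < s := Real.sqrt_pos.2 hpos
    have hs2 : s ^ 2 = x ^ 2 - 1 := Real.sq_sqrt hpos.le
    have hsne := hs.ne'
    have hx0' := hx0.ne'
    have hdiv : HasDerivAt (fun x : ℝ => x / Real.sqrt (x ^ 2 - 1))
        ((1 * s - x * (1 / (2 * s) * (2 * x))) / s ^ 2) x := (hasDerivAt_id x).div hsq hsne
    have hlog : HasDerivAt (fun x : ℝ => Real.log x - c) x⁻¹ x :=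
      (Real.hasDerivAt_log hx0.ne').sub_const c
    have hmul := (hdiv.const_mul (Real.sqrt N)).mul hlog
    have heq2 : Real.sqrt N * ((x ^ 2 - 1 - Real.log x + c) / s ^ 3)
        = Real.sqrt N * ((1 * s - x * (1 / (2 * s) * (2 * x))) / s ^ 2) * (Real.log x - c)
          + Real.sqrt N * (x / s) * x⁻¹ := by
      rw [← hs2]
      field_simp
      linear_combination (-(Real.log x - c)) * hs2
    rw [heq2]
    exact hmul
  apply strictMonoOn_of_deriv_pos (convex_Ioi 1)
  · exact fun x hx => (key x hx).continuousAt.continuousWithinAt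
  · intro x hx
    rw [interior_Ioi] at hx
    rw [(key x hx).deriv]
    have hx1 : (1:ℝ) < x := hx
    have hx0 : (0:ℝ) < x := lt_trans one_pos hx1
    have hpos : 0 < x ^ 2 - 1 := by nlinarith
    have hs : 0 < Real.sqrt (x ^ 2 - 1) := Real.sqrt_pos.2 hpos
    have hlog : Real.log x < x - 1 := Real.log_lt_sub_one_of_pos hx0 (ne_of_gt hx1)
    have hnum : 0 < x ^ 2 - 1 - Real.log x + c := by nlinarith
    positivity

theorem f_strictMonoOn (N R : ℝ) (hN : 0 < N) (hR : 0 ≤ R) :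
    StrictMonoOn
      (fun γ : ℝ => Real.log 2 * Real.sqrt (N / (1 - ((1 + γ) ^ 2)⁻¹)) *
        (Real.log (1 + γ) / Real.log 2 - R))
      (Set.Ioi (0 : ℝ)) := by
  have hl2 : (0:ℝ) < Real.log 2 := Real.log_pos one_lt_two
  have heq : ∀ γ ∈ Set.Ioi (0:ℝ),
      Real.log 2 * Real.sqrt (N / (1 - ((1 + γ) ^ 2)⁻¹)) *
        (Real.log (1 + γ) / Real.log 2 - R) =
      Real.sqrt N * ((1 + γ) / Real.sqrt ((1 + γ) ^ 2 - 1)) *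
        (Real.log (1 + γ) - R * Real.log 2) := by
    intro γ hγ
    have hγ0 : (0:ℝ) < γ := hγ
    set x := 1 + γ with hxdef
    have hx1 : (1:ℝ) < x := by rw [hxdef]; linarith
    have hx0 : (0:ℝ) < x := lt_trans one_pos hx1
    have hpos : 0 < x ^ 2 - 1 := by nlinarith
    have h2 : (1 : ℝ) - (x ^ 2)⁻¹ = (x ^ 2 - 1) / x ^ 2 := by
      field_simp
    rw [h2, div_div_eq_mul_div, show N * x ^ 2 / (x ^ 2 - 1) = N * (x ^ 2 / (x ^ 2 - 1)) by ring,
      Real.sqrt_mul hN.le, Real.sqrt_div (sq_nonneg x), Real.sqrt_sq hx0.le]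
    field_simp
  intro a ha b hb hab
  have ha' : (0:ℝ) < a := ha
  have hb' : (0:ℝ) < b := hb
  dsimp only
  rw [heq a ha, heq b hb]
  exact aux_mono N (R * Real.log 2) hN (by positivity)
    (Set.mem_Ioi.2 (by linarith)) (Set.mem_Ioi.2 (by linarith)) (by linarith)
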